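/- Let (Pₙ) be a sequence of polynomials over ℂ with P₀ = 1, deg Pₙ = n, and suppose P₁(x)·Pₙ(x) = aₙ Pₙ₋₁(x) + bₙ Pₙ(x) + cₙ Pₙ₊₁(x) for all n ≥ 1, with real coefficients aₙ, bₙ, cₙ ≥ 0 summing to 1 and aₙ, cₙ > 0, and P₁(x) = x (normalized). Fix λ ∈ ℂ and suppose f : ℕ → ℂ satisfies f(0) = 0 and the recursion aₙ f(n−1) + bₙ f(n) + cₙ f(n+1) = λ f(n) + f(1) Pₙ(λ) for all n ≥ 1, and f(1) = f(1). Then f(n) = f(1) · Pₙ′(λ) for all n ∈ ℕ. -/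
import Mathlib


theorem sine_on_polynomial_hypergroup
    (P : ℕ → Polynomial ℂ) (a b c : ℕ → ℝ)
    (hP0 : P 0 = 1) (hP1 : P 1 = Polynomial.X)
    (hdeg : ∀ n : ℕ, (P n).natDegree = n)
    (ha : ∀ n : ℕ, 0 ≤ a n) (hb : ∀ n : ℕ, 0 ≤ b n) (hc : ∀ n : ℕ, 0 ≤ c n)
    (hapos : ∀ n : ℕ, 1 ≤ n → 0 < a n) (hcpos : ∀ n : ℕ, 1 ≤ n → 0 < c n)
    (hsum : ∀ n : ℕ, 1 ≤ n → a n + b n + c n = 1)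
    (hlin : ∀ n : ℕ, 1 ≤ n →
      P 1 * P n = Polynomial.C (a n : ℂ) * P (n - 1) + Polynomial.C (b n : ℂ) * P n +
        Polynomial.C (c n : ℂ) * P (n + 1))
    (l : ℂ) (f : ℕ → ℂ) (hf0 : f 0 = 0)
    (hrec : ∀ n : ℕ, 1 ≤ n →
      (a n : ℂ) * f (n - 1) + (b n : ℂ) * f n + (c n : ℂ) * f (n + 1) =
        l * f n + f 1 * (P n).eval l) :
    ∀ n : ℕ, f n = f 1 * ((P n).derivative.eval l) := by
  -- derivative identity
  have hder : ∀ n : ℕ, 1 ≤ n →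
      (a n : ℂ) * (P (n-1)).derivative.eval l + (b n : ℂ) * (P n).derivative.eval l +
        (c n : ℂ) * (P (n+1)).derivative.eval l =
        l * (P n).derivative.eval l + (P n).eval l := by
    intro n hn
    have h := congrArg (fun p => Polynomial.eval l (Polynomial.derivative p)) (hlin n hn)
    simp only [hP1, Polynomial.derivative_mul, Polynomial.derivative_X, Polynomial.derivative_add,
      Polynomial.derivative_C, Polynomial.eval_add, Polynomial.eval_mul,
      Polynomial.eval_X, Polynomial.eval_C, Polynomial.eval_zero,
      zero_mul, one_mul, zero_add] at h
    linear_combination -h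
  intro n
  induction n using Nat.twoStepInduction with
  | zero => simp [hf0, hP0]
  | one => simp [hP1]
  | more n ih1 ih2 =>
    have hn : 1 ≤ n + 1 := Nat.le_add_left 1 n
    have h1 := hrec (n+1) hn
    have h2 := hder (n+1) hn
    simp only [Nat.add_sub_cancel] at h1 h2
    have hc' : (c (n+1) : ℂ) ≠ 0 := by
      exact_mod_cast (hcpos (n+1) hn).ne'
    have : (c (n+1) : ℂ) * f (n+2) = (c (n+1) : ℂ) * (f 1 * (P (n+2)).derivative.eval l) := by
      linear_combination h1 - f 1 * h2 - (a (n+1) : ℂ) * ih1 - (b (n+1) : ℂ) * ih2 + l * ih2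
    exact mul_left_cancel₀ hc' this
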